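/- (Convergence rate, Theorem A.4.) Let D(F) be convex, let y ∈ Y, and let x† be an x*-S-minimum-norm solution with x* = 0 a.e. on Ω∖S. Assume: F is Fréchet differentiable; there exist γ ≥ 0 and ρ > 2‖x† − x*‖_{L²} such that ‖F'(x†) − F'(x)‖ ≤ γ‖x† − x‖_{L²} for all x ∈ D(F) with ‖x − x†‖_{L²} < ρ; there exists ω ∈ Y with x† − x* = F'(x†)*ω; and γ‖ω‖_Y < 1. Then, with the parameter choice α(δ) = δ, there exist constants C > 0 and δ₀ > 0 such that for every 0 < δ ≤ δ₀, every y^δ ∈ Y with ‖y − y^δ‖_Y ≤ δ, and every minimizer x^δ of J_{δ,S,y^δ} over D(F): ‖x^δ − x†‖_{S⁺} ≤ C√δ, ‖x^δ − x†‖_{S⁻} ≤ Cδ, and ‖F(x^δ) − y‖_Y ≤ Cδ. -/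

import Mathlib

open MeasureTheory Filter
open scoped RealInnerProductSpace ENNReal Topology

noncomputable section

/-- Weak sequential convergence in a real inner product space. -/
def WeakConv {H : Type*} [NormedAddCommGroup H] [InnerProductSpace ℝ H]
    (u : ℕ → H) (x : H) : Prop :=
  ∀ z : H, Tendsto (fun k => ⟪u k, z⟫) atTop (𝓝 ⟪x, z⟫)

/-- The squared `L²` mass of (a representative of) `x : L²(Ω)` over the set `T`. -/
def sqInt {n : ℕ} (Ω : Set (Fin n → ℝ)) (T : Set (Fin n → ℝ))
    (x : Lp ℝ 2 (volume.restrict Ω)) : ℝ :=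
  ∫ t in T, (x t) ^ 2 ∂(volume.restrict Ω)

/-- The Tikhonov-type functional
`J_{α,S,z}(x) = ‖F(x) − z‖² + α‖x − x*‖_{S⁺}² + ‖x − x*‖_{S⁻}²`. -/
def J {n : ℕ} (Ω : Set (Fin n → ℝ)) {Y : Type*} [NormedAddCommGroup Y]
    [InnerProductSpace ℝ Y]
    (F : Lp ℝ 2 (volume.restrict Ω) → Y) (xstar : Lp ℝ 2 (volume.restrict Ω))
    (α : ℝ) (S : Set (Fin n → ℝ)) (z : Y) (x : Lp ℝ 2 (volume.restrict Ω)) : ℝ :=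
  ‖F x - z‖ ^ 2 + (α * sqInt Ω S (x - xstar) + sqInt Ω (Ω \ S) (x - xstar))

/-- `x` is a minimizer of the functional `Jf` over the set `D`. -/
def IsMinimizer {X' : Type*} (Jf : X' → ℝ) (D : Set X') (x : X') : Prop :=
  x ∈ D ∧ ∀ x' ∈ D, Jf x ≤ Jf x'

/-- `x = 0` almost everywhere on `Ω ∖ S`. -/
def ZeroOff {n : ℕ} (Ω S : Set (Fin n → ℝ))
    (x : Lp ℝ 2 (volume.restrict Ω)) : Prop :=
  ∀ᵐ t ∂((volume.restrict Ω).restrict (Ω \ S)), x t = 0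

/-- `xdag` is an `x*`-`S`-minimum-norm solution of `F(x) = y`: it belongs to
`D(F)`, solves `F(xdag) = y`, vanishes a.e. on `Ω ∖ S`, and minimizes
`‖x − x*‖_{L²}` among all such solutions. -/
def IsMNS {n : ℕ} (Ω : Set (Fin n → ℝ)) {Y : Type*} [NormedAddCommGroup Y]
    [InnerProductSpace ℝ Y]
    (D : Set (Lp ℝ 2 (volume.restrict Ω))) (F : Lp ℝ 2 (volume.restrict Ω) → Y)
    (xstar : Lp ℝ 2 (volume.restrict Ω)) (S : Set (Fin n → ℝ)) (y : Y)
    (xdag : Lp ℝ 2 (volume.restrict Ω)) : Prop :=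
  xdag ∈ D ∧ F xdag = y ∧ ZeroOff Ω S xdag ∧
    ∀ x ∈ D, F x = y → ZeroOff Ω S x → ‖xdag - xstar‖ ≤ ‖x - xstar‖

section AuxMeasure

variable {n : ℕ} {Ω : Set (Fin n → ℝ)}

lemma integrable_mul_L2 (f g : Lp ℝ 2 (volume.restrict Ω)) :
    Integrable (fun t => f t * g t) (volume.restrict Ω) := by
  have h := MeasureTheory.L2.integrable_inner (𝕜 := ℝ) g f
  simpa [RCLike.inner_apply, starRingEnd_apply] using h

lemma inner_eq_integral (f g : Lp ℝ 2 (volume.restrict Ω)) :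
    ⟪f, g⟫ = ∫ t, f t * g t ∂(volume.restrict Ω) := by
  rw [MeasureTheory.L2.inner_def]
  simp [RCLike.inner_apply, starRingEnd_apply, mul_comm]

lemma integrable_sq_L2 (x : Lp ℝ 2 (volume.restrict Ω)) :
    Integrable (fun t => (x t) ^ 2) (volume.restrict Ω) := by
  simpa [pow_two] using integrable_mul_L2 x x

lemma sqInt_nonneg' (T : Set (Fin n → ℝ)) (x : Lp ℝ 2 (volume.restrict Ω)) :
    0 ≤ sqInt Ω T x :=
  integral_nonneg fun t => sq_nonneg _

lemma sqInt_split (hΩ : MeasurableSet Ω) {S : Set (Fin n → ℝ)} (hS : MeasurableSet S)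
    (x : Lp ℝ 2 (volume.restrict Ω)) :
    sqInt Ω S x + sqInt Ω (Ω \ S) x = ‖x‖ ^ 2 := by
  have hnorm : ‖x‖ ^ 2 = ∫ t, (x t) ^ 2 ∂(volume.restrict Ω) := by
    rw [← real_inner_self_eq_norm_sq, inner_eq_integral]
    simp [pow_two]
  have hcompl : (sqInt Ω (Ω \ S) x) = ∫ t in Sᶜ, (x t) ^ 2 ∂(volume.restrict Ω) := by
    unfold sqInt
    rw [Measure.restrict_restrict (hΩ.diff hS), Measure.restrict_restrict hS.compl]
    congr 2
    ext t
    constructor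
    · rintro ⟨⟨h1, h2⟩, -⟩; exact ⟨h2, h1⟩
    · rintro ⟨h1, h2⟩; exact ⟨⟨h2, h1⟩, h2⟩
  rw [hcompl, hnorm]
  exact integral_add_compl hS (integrable_sq_L2 x)

lemma sqInt_zero_of_ae {T : Set (Fin n → ℝ)} {x : Lp ℝ 2 (volume.restrict Ω)}
    (h : ∀ᵐ t ∂((volume.restrict Ω).restrict T), x t = 0) :
    sqInt Ω T x = 0 := by
  unfold sqInt
  rw [integral_congr_ae (g := fun _ => (0:ℝ)) (by filter_upwards [h] with t ht; simp [ht])]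
  simp

lemma sqInt_congr_ae {T : Set (Fin n → ℝ)} {x y : Lp ℝ 2 (volume.restrict Ω)}
    (h : ∀ᵐ t ∂((volume.restrict Ω).restrict T), x t = y t) :
    sqInt Ω T x = sqInt Ω T y :=
  integral_congr_ae (by filter_upwards [h] with t ht; rw [ht])

lemma restrict_compl_eq (hΩ : MeasurableSet Ω) {S : Set (Fin n → ℝ)} (hS : MeasurableSet S) :
    (volume.restrict Ω).restrict Sᶜ = (volume.restrict Ω).restrict (Ω \ S) := by
  rw [Measure.restrict_restrict (hΩ.diff hS), Measure.restrict_restrict hS.compl]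
  congr 1
  ext t
  constructor
  · rintro ⟨h1, h2⟩; exact ⟨⟨h2, h1⟩, h2⟩
  · rintro ⟨⟨h1, h2⟩, -⟩; exact ⟨h2, h1⟩

lemma setInt_mul_eq_inner (hΩ : MeasurableSet Ω) {S : Set (Fin n → ℝ)} (hS : MeasurableSet S)
    (u w : Lp ℝ 2 (volume.restrict Ω))
    (hw : ∀ᵐ t ∂((volume.restrict Ω).restrict (Ω \ S)), w t = 0) :
    ∫ t in S, u t * w t ∂(volume.restrict Ω) = ⟪u, w⟫ := by
  have h0 : ∫ t in Sᶜ, u t * w t ∂(volume.restrict Ω) = 0 := by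
    rw [show (∫ t in Sᶜ, u t * w t ∂(volume.restrict Ω))
        = ∫ t, u t * w t ∂((volume.restrict Ω).restrict (Ω \ S)) by
      rw [restrict_compl_eq hΩ hS]]
    rw [integral_congr_ae (g := fun _ => (0:ℝ)) (by filter_upwards [hw] with t ht; simp [ht])]
    simp
  rw [inner_eq_integral, ← integral_add_compl hS (integrable_mul_L2 u w), h0, add_zero]

lemma sqInt_add (T : Set (Fin n → ℝ)) (u w : Lp ℝ 2 (volume.restrict Ω)) :
    sqInt Ω T (u + w) = sqInt Ω T u + 2 * ∫ t in T, u t * w t ∂(volume.restrict Ω)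
      + sqInt Ω T w := by
  have hco : ∀ᵐ t ∂((volume.restrict Ω).restrict T),
      ((u + w : Lp ℝ 2 (volume.restrict Ω)) t) ^ 2
        = (u t) ^ 2 + 2 * (u t * w t) + (w t) ^ 2 := by
    filter_upwards [ae_restrict_of_ae (Lp.coeFn_add u w)] with t ht
    rw [ht, Pi.add_apply]; ring
  have h1 : Integrable (fun t => (u t) ^ 2) ((volume.restrict Ω).restrict T) :=
    (integrable_sq_L2 u).restrict
  have h2 : Integrable (fun t => 2 * (u t * w t)) ((volume.restrict Ω).restrict T) :=
    ((integrable_mul_L2 u w).restrict).const_mul 2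
  have h3 : Integrable (fun t => (w t) ^ 2) ((volume.restrict Ω).restrict T) :=
    (integrable_sq_L2 w).restrict
  have h12 : Integrable (fun t => (u t) ^ 2 + 2 * (u t * w t))
      ((volume.restrict Ω).restrict T) := h1.add h2
  unfold sqInt
  rw [integral_congr_ae hco, integral_add h12 h3, integral_add h1 h2,
    integral_const_mul]

end AuxMeasure

lemma taylor_bound {X Y : Type*} [NormedAddCommGroup X] [NormedSpace ℝ X]
    [NormedAddCommGroup Y] [NormedSpace ℝ Y]
    {D : Set X} (hDconv : Convex ℝ D) {F : X → Y} (hFcont : ContinuousOn F D)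
    {F' : X → (X →L[ℝ] Y)} (hFderiv : ∀ x ∈ D, HasFDerivWithinAt F (F' x) D x)
    {γ ρ : ℝ} {a b : X} (ha : a ∈ D) (hb : b ∈ D)
    (hLip : ∀ x ∈ D, ‖x - a‖ < ρ → ‖F' a - F' x‖ ≤ γ * ‖a - x‖)
    (hdist : ‖b - a‖ < ρ) :
    ‖F b - F a - F' a (b - a)‖ ≤ γ / 2 * ‖b - a‖ ^ 2 := by
  set u : X := b - a with hu
  set v : Y := F' a u with hv
  set c : ℝ → X := fun t => a + t • u with hc
  have hcD : ∀ t ∈ Set.Icc (0:ℝ) 1, c t ∈ D := by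
    intro t ht
    have h := hDconv ha hb (by linarith [ht.2] : (0:ℝ) ≤ 1 - t) ht.1 (by ring)
    have : (1 - t) • a + t • b = c t := by
      simp only [hc, hu, sub_smul, one_smul, smul_sub]
      abel
    rwa [this] at h
  have hcdist : ∀ t ∈ Set.Icc (0:ℝ) 1, ‖c t - a‖ = t * ‖u‖ := by
    intro t ht
    simp only [hc, add_sub_cancel_left, norm_smul, Real.norm_eq_abs, abs_of_nonneg ht.1]
  set f : ℝ → Y := fun t => F (c t) - (F a + t • v) with hf
  set f' : ℝ → Y := fun t => F' (c t) u - v with hf'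
  set B' : ℝ → ℝ := fun t => γ * ‖u‖ ^ 2 * t with hB'
  set B : ℝ → ℝ := fun t => γ / 2 * ‖u‖ ^ 2 * t ^ 2 with hB
  have hccont : Continuous c := continuous_const.add (continuous_id.smul continuous_const)
  have hmaps : Set.MapsTo c (Set.Icc (0:ℝ) 1) D := fun t ht => hcD t ht
  have hfc : ContinuousOn f (Set.Icc (0:ℝ) 1) := by
    apply ContinuousOn.sub
    · exact hFcont.comp hccont.continuousOn hmaps
    · exact (continuous_const.add (continuous_id.smul continuous_const)).continuousOn
  have hderiv : ∀ t ∈ Set.Ico (0:ℝ) 1, HasDerivWithinAt f (f' t) (Set.Ici t) t := by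
    intro t ht
    have hct : HasDerivAt c u t := by
      have := ((hasDerivAt_id t).smul_const u).const_add a
      simp only [one_smul] at this
      exact this
    have hFc : HasDerivWithinAt (F ∘ c) (F' (c t) u) (Set.Icc t 1) t := by
      refine (hFderiv (c t) (hcD t ⟨ht.1, ht.2.le⟩)).comp_hasDerivWithinAt t
        hct.hasDerivWithinAt ?_
      exact fun s hs => hcD s ⟨le_trans ht.1 hs.1, hs.2⟩
    have hset : Set.Icc t 1 =ᶠ[𝓝 t] Set.Ici t := by
      rw [Filter.eventuallyEq_set]
      filter_upwards [Iio_mem_nhds ht.2] with s hs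
      simp only [Set.mem_Icc, Set.mem_Ici]
      exact ⟨fun h => h.1, fun h => ⟨h, hs.le⟩⟩
    have hFc' : HasDerivWithinAt (F ∘ c) (F' (c t) u) (Set.Ici t) t :=
      (hasDerivWithinAt_congr_set hset).1 hFc
    have hlin : HasDerivWithinAt (fun s : ℝ => F a + s • v) v (Set.Ici t) t :=
      (((hasDerivAt_id t).smul_const v).const_add (F a)).hasDerivWithinAt.congr_deriv
        (by simp)
    exact hFc'.sub hlin
  have hbound : ∀ t ∈ Set.Ico (0:ℝ) 1, ‖f' t‖ ≤ B' t := by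
    intro t ht
    have hctD : c t ∈ D := hcD t ⟨ht.1, ht.2.le⟩
    have hctd : ‖c t - a‖ = t * ‖u‖ := hcdist t ⟨ht.1, ht.2.le⟩
    have hlt : ‖c t - a‖ < ρ := by
      rw [hctd]
      calc t * ‖u‖ ≤ 1 * ‖u‖ := by
            apply mul_le_mul_of_nonneg_right ht.2.le (norm_nonneg u)
        _ = ‖u‖ := one_mul _
        _ < ρ := hdist
    have hL := hLip (c t) hctD hlt
    have h1 : f' t = (F' a - F' (c t)) (-u) := by
      simp [hf', hv, ContinuousLinearMap.sub_apply]; abel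
    calc ‖f' t‖ = ‖(F' a - F' (c t)) (-u)‖ := by rw [h1]
      _ ≤ ‖F' a - F' (c t)‖ * ‖-u‖ := ContinuousLinearMap.le_opNorm _ _
      _ = ‖F' a - F' (c t)‖ * ‖u‖ := by rw [norm_neg]
      _ ≤ (γ * ‖a - c t‖) * ‖u‖ := by
          apply mul_le_mul_of_nonneg_right hL (norm_nonneg u)
      _ = B' t := by rw [norm_sub_rev, hctd, hB']; ring
  have hBd : ∀ t : ℝ, HasDerivAt B (B' t) t := by
    intro t
    have := (hasDerivAt_pow 2 t).const_mul (γ / 2 * ‖u‖ ^ 2)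
    refine this.congr_deriv ?_
    simp only [hB']
    push_cast
    ring
  have h0 : ‖f 0‖ ≤ B 0 := by simp [hf, hB, hc]
  have hmain := image_norm_le_of_norm_deriv_right_le_deriv_boundary hfc hderiv h0 hBd hbound
    (Set.right_mem_Icc.2 zero_le_one)
  have hc1 : c 1 = b := by simp [hc, hu]
  have hf1 : f 1 = F b - F a - F' a (b - a) := by
    rw [hf]
    simp only [hc1, one_smul, hv, hu]
    abel
  rw [← hf1]
  calc ‖f 1‖ ≤ B 1 := hmain
    _ = γ / 2 * ‖b - a‖ ^ 2 := by rw [hB, hu]; ring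


lemma sqrt_sq_add_le (a e : ℝ) (ha : 0 ≤ a) (he : 0 ≤ e) :
    Real.sqrt (a ^ 2 + e) ≤ a + Real.sqrt e := by
  have h1 : Real.sqrt e ^ 2 = e := Real.sq_sqrt he
  have h2 : 0 ≤ a * Real.sqrt e := mul_nonneg ha (Real.sqrt_nonneg e)
  have h3 : a ^ 2 + e ≤ (a + Real.sqrt e) ^ 2 := by nlinarith
  calc Real.sqrt (a ^ 2 + e) ≤ Real.sqrt ((a + Real.sqrt e) ^ 2) := Real.sqrt_le_sqrt h3
    _ = a + Real.sqrt e := Real.sqrt_sq (by positivity)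

set_option maxHeartbeats 1600000 in
lemma rate_arith (δ A B τ I no γ : ℝ) (hδ : 0 < δ) (hδ1 : δ ≤ 1) (hγ : 0 ≤ γ)
    (hno0 : 0 ≤ no) (hq1 : γ * no < 1) (hA0 : 0 ≤ A) (hB0 : 0 ≤ B) (hτ0 : 0 ≤ τ)
    (hE1 : τ ^ 2 + δ * A + B + 2 * δ * I ≤ δ ^ 2)
    (hnegI : -I ≤ no * (τ + δ) + no * (γ / 2 * (A + B))) :
    τ ≤ δ * (1 + 2 * no) ∧ A ≤ (2 + 2 * no) ^ 2 / (1 - γ * no) * δ ∧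
      B ≤ (2 + 2 * no) ^ 2 / (1 - γ * no) * δ ^ 2 := by
  have hs : (0:ℝ) < 1 - γ * no := by linarith
  have h2δ : 2 * δ * (-I) ≤ 2 * δ * (no * (τ + δ) + no * (γ / 2 * (A + B))) :=
    mul_le_mul_of_nonneg_left hnegI (by positivity)
  have habs : 0 ≤ (1 - δ) * (γ * no) * B :=
    mul_nonneg (mul_nonneg (by linarith) (by positivity)) hB0
  have hkey : (τ - δ * no) ^ 2 + (1 - γ * no) * (δ * A) + (1 - γ * no) * B
      ≤ δ ^ 2 * (1 + no) ^ 2 := by nlinarith [h2δ, hE1, habs]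
  have hδA0 : 0 ≤ (1 - γ * no) * (δ * A) := mul_nonneg hs.le (mul_nonneg hδ.le hA0)
  have hB0' : 0 ≤ (1 - γ * no) * B := mul_nonneg hs.le hB0
  have hsq : (τ - δ * no) ^ 2 ≤ (δ * (1 + no)) ^ 2 := by nlinarith [hkey]
  have hbpos : 0 < δ * (1 + no) := by positivity
  have haux : δ ^ 2 * (1 + no) ^ 2 ≤ δ ^ 2 * (2 + 2 * no) ^ 2 := by
    apply mul_le_mul_of_nonneg_left _ (sq_nonneg δ)
    nlinarith
  refine ⟨?_, ?_, ?_⟩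
  · nlinarith [hsq, sq_nonneg (τ - δ * no - δ * (1 + no)), hbpos]
  · have h1 : (1 - γ * no) * (δ * A) ≤ δ ^ 2 * (1 + no) ^ 2 := by
      nlinarith [hkey, sq_nonneg (τ - δ * no)]
    have h2 : δ * ((1 - γ * no) * A) ≤ δ * (δ * (1 + no) ^ 2) := by nlinarith [h1]
    have h3 : (1 - γ * no) * A ≤ δ * (1 + no) ^ 2 := le_of_mul_le_mul_left h2 hδ
    rw [div_mul_eq_mul_div, le_div_iff₀ hs]
    nlinarith [h3, hδ.le, hno0]
  · have h1 : (1 - γ * no) * B ≤ δ ^ 2 * (1 + no) ^ 2 := by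
      nlinarith [hkey, sq_nonneg (τ - δ * no)]
    rw [div_mul_eq_mul_div, le_div_iff₀ hs]
    nlinarith [h1, haux]


set_option maxHeartbeats 1000000 in
/-- **Convergence rate** (Theorem A.4): under convexity of `D(F)`, Fréchet
differentiability of `F`, a Lipschitz bound on the derivative in the ball of
radius `ρ > 2‖x† − x*‖` around the `x*`-`S`-minimum-norm solution `x†`, the
source condition `x† − x* = F'(x†)*ω`, and `γ‖ω‖ < 1`, the parameter choice
`α(δ) = δ` yields, for all sufficiently small `δ > 0`, the rates
`‖x^δ − x†‖_{S⁺} = O(√δ)`, `‖x^δ − x†‖_{S⁻} = O(δ)` and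
`‖F(x^δ) − y‖ = O(δ)` for every minimizer `x^δ` of `J_{δ,S,y^δ}`. -/
theorem convergence_rate
    {n : ℕ} (Ω : Set (Fin n → ℝ)) (hΩmeas : MeasurableSet Ω)
    (hΩbdd : Bornology.IsBounded Ω)
    {Y : Type*} [NormedAddCommGroup Y] [InnerProductSpace ℝ Y] [CompleteSpace Y]
    (D : Set (Lp ℝ 2 (volume.restrict Ω))) (hD : D.Nonempty)
    (hDconv : Convex ℝ D)
    (F : Lp ℝ 2 (volume.restrict Ω) → Y)
    (hFcont : ContinuousOn F D)
    (hFweak : ∀ (u : ℕ → Lp ℝ 2 (volume.restrict Ω))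
      (x : Lp ℝ 2 (volume.restrict Ω)) (z : Y),
      (∀ k, u k ∈ D) → WeakConv u x → WeakConv (fun k => F (u k)) z →
        x ∈ D ∧ F x = z)
    (xstar : Lp ℝ 2 (volume.restrict Ω))
    (S : Set (Fin n → ℝ)) (hSmeas : MeasurableSet S) (hSΩ : S ⊆ Ω)
    (hxstar : ZeroOff Ω S xstar)
    (y : Y)
    (xdag : Lp ℝ 2 (volume.restrict Ω)) (hxdag : IsMNS Ω D F xstar S y xdag)
    (F' : Lp ℝ 2 (volume.restrict Ω) → (Lp ℝ 2 (volume.restrict Ω) →L[ℝ] Y))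
    (hFderiv : ∀ x ∈ D, HasFDerivWithinAt F (F' x) D x)
    (γ : ℝ) (hγ : 0 ≤ γ) (ρ : ℝ) (hρ : 2 * ‖xdag - xstar‖ < ρ)
    (hLip : ∀ x ∈ D, ‖x - xdag‖ < ρ → ‖F' xdag - F' x‖ ≤ γ * ‖xdag - x‖)
    (ω : Y) (hω : xdag - xstar = ContinuousLinearMap.adjoint (F' xdag) ω)
    (hsmall : γ * ‖ω‖ < 1) :
    ∃ C > (0 : ℝ), ∃ δ₀ > (0 : ℝ), ∀ δ : ℝ, 0 < δ → δ ≤ δ₀ →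
      ∀ yδ : Y, ‖y - yδ‖ ≤ δ →
        ∀ xδ : Lp ℝ 2 (volume.restrict Ω),
          IsMinimizer (J Ω F xstar δ S yδ) D xδ →
            Real.sqrt (sqInt Ω S (xδ - xdag)) ≤ C * Real.sqrt δ ∧
            Real.sqrt (sqInt Ω (Ω \ S) (xδ - xdag)) ≤ C * δ ∧
            ‖F xδ - y‖ ≤ C * δ := by
  set w : Lp ℝ 2 (volume.restrict Ω) := xdag - xstar with hwdef
  set nw : ℝ := ‖w‖ with hnw
  set no : ℝ := ‖ω‖ with hno
  set q : ℝ := γ * no with hq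
  have hq0 : 0 ≤ q := mul_nonneg hγ (norm_nonneg ω)
  have hs : (0:ℝ) < 1 - q := by linarith only [hq0, hsmall]
  have hnw0 : 0 ≤ nw := norm_nonneg w
  have hno0 : 0 ≤ no := norm_nonneg ω
  have hgap : 0 < ρ - 2 * nw := by simpa [hnw] using sub_pos.2 hρ
  set sqr : ℝ := Real.sqrt (1 - q) with hsq
  have hsq0 : 0 < sqr := Real.sqrt_pos.2 hs
  have hsq1 : sqr ≤ 1 := by
    rw [hsq]
    calc Real.sqrt (1 - q) ≤ Real.sqrt 1 := Real.sqrt_le_sqrt (by linarith only [hq0])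
      _ = 1 := Real.sqrt_one
  set C : ℝ := (2 + 2 * no) / sqr with hC
  have hCpos : 0 < C := div_pos (by linarith only [hno0]) hsq0
  have hC2 : C ^ 2 = (2 + 2 * no) ^ 2 / (1 - q) := by
    rw [hC, div_pow, hsq, Real.sq_sqrt hs.le]
  have hCge : 2 + 2 * no ≤ C := by
    rw [hC, le_div_iff₀ hsq0]
    nlinarith only [hsq1, hsq0, hno0]
  set δ₀ : ℝ := min 1 ((ρ - 2 * nw) ^ 2 / (2 * (2 + nw ^ 2))) with hδ₀
  have hδ₀pos : 0 < δ₀ := by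
    apply lt_min one_pos
    apply div_pos (by positivity) (by positivity)
  refine ⟨C, hCpos, δ₀, hδ₀pos, ?_⟩
  intro δ hδ hδδ₀ yδ hyδ xδ hminz
  have hδ1 : δ ≤ 1 := le_trans hδδ₀ (min_le_left _ _)
  have hxδD : xδ ∈ D := hminz.1
  -- w vanishes a.e. off S
  have hw0 : ∀ᵐ t ∂((volume.restrict Ω).restrict (Ω \ S)), w t = 0 := by
    filter_upwards [ae_restrict_of_ae (Lp.coeFn_sub xdag xstar), hxdag.2.2.1, hxstar]
      with t h1 h2 h3
    rw [hwdef, h1, Pi.sub_apply, h2, h3, sub_zero]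
  have hsqw : sqInt Ω S w = nw ^ 2 := by
    have h1 := sqInt_split hΩmeas hSmeas w
    have h2 := sqInt_zero_of_ae hw0
    rw [hnw]; linarith only [h1, h2]
  -- decomposition identities
  have expand1 : ∀ x : Lp ℝ 2 (volume.restrict Ω),
      sqInt Ω S (x - xstar) = sqInt Ω S (x - xdag) + 2 * ⟪x - xdag, w⟫ + nw ^ 2 := by
    intro x
    have hxx : x - xstar = (x - xdag) + w := by rw [hwdef]; abel
    rw [hxx, sqInt_add S (x - xdag) w,
      setInt_mul_eq_inner hΩmeas hSmeas (x - xdag) w hw0, hsqw]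
  have expand2 : ∀ x : Lp ℝ 2 (volume.restrict Ω),
      sqInt Ω (Ω \ S) (x - xstar) = sqInt Ω (Ω \ S) (x - xdag) := by
    intro x
    apply sqInt_congr_ae
    filter_upwards [ae_restrict_of_ae (Lp.coeFn_sub x xstar),
      ae_restrict_of_ae (Lp.coeFn_sub x xdag), hxdag.2.2.1, hxstar] with t h1 h2 h3 h4
    rw [h1, h2, Pi.sub_apply, Pi.sub_apply, h3, h4]
  -- notations
  set A : ℝ := sqInt Ω S (xδ - xdag) with hA
  set Bq : ℝ := sqInt Ω (Ω \ S) (xδ - xdag) with hBq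
  set τ : ℝ := ‖F xδ - yδ‖ with hτ
  set I : ℝ := ⟪xδ - xdag, w⟫ with hI
  have hA0 : 0 ≤ A := sqInt_nonneg' _ _
  have hB0 : 0 ≤ Bq := sqInt_nonneg' _ _
  have hτ0 : 0 ≤ τ := norm_nonneg _
  have hABnorm : A + Bq = ‖xδ - xdag‖ ^ 2 := sqInt_split hΩmeas hSmeas _
  -- minimizer inequality
  have hJ := hminz.2 xdag hxdag.1
  simp only [J] at hJ
  rw [hxdag.2.1] at hJ
  have hzero2 : sqInt Ω (Ω \ S) (xdag - xstar) = 0 := sqInt_zero_of_ae hw0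
  have hsqw' : sqInt Ω S (xdag - xstar) = nw ^ 2 := hsqw
  have hyδ2 : ‖y - yδ‖ ^ 2 ≤ δ ^ 2 := by
    apply pow_le_pow_left₀ (norm_nonneg _) hyδ
  have hJineq : τ ^ 2 + (δ * sqInt Ω S (xδ - xstar) + sqInt Ω (Ω \ S) (xδ - xstar))
      ≤ δ ^ 2 + δ * nw ^ 2 := by
    rw [hsqw', hzero2] at hJ
    calc τ ^ 2 + (δ * sqInt Ω S (xδ - xstar) + sqInt Ω (Ω \ S) (xδ - xstar))
        ≤ ‖y - yδ‖ ^ 2 + (δ * nw ^ 2 + 0) := hJ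
      _ ≤ δ ^ 2 + δ * nw ^ 2 := by linarith only [hyδ2]
  -- a priori bound : ‖xδ - xdag‖ < ρ
  have hsplitxs := sqInt_split hΩmeas hSmeas (xδ - xstar)
  have hSP0 : 0 ≤ sqInt Ω S (xδ - xstar) := sqInt_nonneg' _ _
  have hSM0 : 0 ≤ sqInt Ω (Ω \ S) (xδ - xstar) := sqInt_nonneg' _ _
  have hδ2 : δ ^ 2 ≤ δ := by nlinarith only [hδ, hδ1]
  have hSP : sqInt Ω S (xδ - xstar) ≤ δ + nw ^ 2 := by
    have hr1 : δ * (δ + nw ^ 2) = δ ^ 2 + δ * nw ^ 2 := by ring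
    have h1 : δ * sqInt Ω S (xδ - xstar) ≤ δ * (δ + nw ^ 2) := by
      rw [hr1]
      linarith only [sq_nonneg τ, hSM0, hJineq]
    exact le_of_mul_le_mul_left h1 hδ
  have hSM : sqInt Ω (Ω \ S) (xδ - xstar) ≤ δ * (1 + nw ^ 2) := by
    have hr1 : δ * (1 + nw ^ 2) = δ + δ * nw ^ 2 := by ring
    rw [hr1]
    linarith only [sq_nonneg τ, mul_nonneg hδ.le hSP0, hJineq, hδ2]
  set ε : ℝ := δ * (2 + nw ^ 2) with hε
  have hε0 : 0 ≤ ε := by positivity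
  have hnormxs2 : ‖xδ - xstar‖ ^ 2 ≤ nw ^ 2 + ε := by
    rw [← hsplitxs, hε]
    linarith only [hSP, hSM]
  have hnormxs : ‖xδ - xstar‖ ≤ nw + Real.sqrt ε := by
    have h1 : ‖xδ - xstar‖ ≤ Real.sqrt (nw ^ 2 + ε) := by
      have := Real.sqrt_le_sqrt hnormxs2
      rwa [Real.sqrt_sq (norm_nonneg _)] at this
    linarith only [h1, sqrt_sq_add_le nw ε hnw0 hε0]
  have hεlt : Real.sqrt ε < ρ - 2 * nw := by
    have hδle : δ ≤ (ρ - 2 * nw) ^ 2 / (2 * (2 + nw ^ 2)) :=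
      le_trans hδδ₀ (min_le_right _ _)
    have h2 : (0:ℝ) < 2 + nw ^ 2 := by positivity
    have hεle : ε ≤ (ρ - 2 * nw) ^ 2 / 2 := by
      rw [hε]
      calc δ * (2 + nw ^ 2) ≤ (ρ - 2 * nw) ^ 2 / (2 * (2 + nw ^ 2)) * (2 + nw ^ 2) :=
            mul_le_mul_of_nonneg_right hδle h2.le
        _ = (ρ - 2 * nw) ^ 2 / 2 := by field_simp
    have hεlt2 : ε < (ρ - 2 * nw) ^ 2 := by nlinarith only [hgap, hεle]
    calc Real.sqrt ε < Real.sqrt ((ρ - 2 * nw) ^ 2) := Real.sqrt_lt_sqrt hε0 hεlt2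
      _ = ρ - 2 * nw := Real.sqrt_sq hgap.le
  have htri : ‖xδ - xdag‖ ≤ ‖xδ - xstar‖ + nw := by
    have h1 : xδ - xdag = (xδ - xstar) - w := by rw [hwdef]; abel
    rw [h1, hnw]
    exact norm_sub_le _ _
  have hult : ‖xδ - xdag‖ < ρ := by linarith only [htri, hnormxs, hεlt]
  -- Taylor estimate
  have hT : ‖F xδ - F xdag - F' xdag (xδ - xdag)‖ ≤ γ / 2 * ‖xδ - xdag‖ ^ 2 :=
    taylor_bound hDconv hFcont hFderiv hxdag.1 hxδD hLip hult
  rw [hxdag.2.1] at hT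
  set r : Y := F xδ - y - F' xdag (xδ - xdag) with hr
  have hrle : ‖r‖ ≤ γ / 2 * (A + Bq) := by rw [hABnorm]; exact hT
  -- source condition estimate
  have hIeq : I = ⟪ω, F xδ - y⟫ - ⟪ω, r⟫ := by
    have e1 : I = ⟪ω, F' xdag (xδ - xdag)⟫ := by
      have had := ContinuousLinearMap.adjoint_inner_left (F' xdag) (xδ - xdag) ω
      rw [hI, ← had, ← hω]
      exact real_inner_comm _ _
    have e2 : F' xdag (xδ - xdag) = (F xδ - y) - r := by rw [hr]; abel
    rw [e1, e2, inner_sub_right]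
  have hFy : ‖F xδ - y‖ ≤ τ + δ := by
    calc ‖F xδ - y‖ = ‖(F xδ - yδ) + (yδ - y)‖ := by congr 1; abel
      _ ≤ ‖F xδ - yδ‖ + ‖yδ - y‖ := norm_add_le _ _
      _ ≤ τ + δ := by rw [norm_sub_rev yδ y]; exact add_le_add le_rfl hyδ
  have hInner1 : -⟪ω, F xδ - y⟫ ≤ no * (τ + δ) := by
    have h1 : -⟪ω, F xδ - y⟫ ≤ ‖ω‖ * ‖F xδ - y‖ := by
      have := abs_real_inner_le_norm ω (F xδ - y)
      have h2 := neg_abs_le (⟪ω, F xδ - y⟫)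
      linarith only [this, h2]
    calc -⟪ω, F xδ - y⟫ ≤ ‖ω‖ * ‖F xδ - y‖ := h1
      _ ≤ no * (τ + δ) := mul_le_mul_of_nonneg_left hFy hno0
  have hInner2 : ⟪ω, r⟫ ≤ no * (γ / 2 * (A + Bq)) := by
    calc ⟪ω, r⟫ ≤ ‖ω‖ * ‖r‖ := real_inner_le_norm ω r
      _ ≤ no * (γ / 2 * (A + Bq)) := mul_le_mul_of_nonneg_left hrle hno0
  have hnegI : -I ≤ no * (τ + δ) + no * (γ / 2 * (A + Bq)) := by
    rw [hIeq]; linarith only [hInner1, hInner2]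
  -- main inequality
  have hE1 : τ ^ 2 + δ * A + Bq + 2 * δ * I ≤ δ ^ 2 := by
    have h1 := hJineq
    rw [expand1 xδ, expand2 xδ] at h1
    rw [← hA, ← hBq, ← hI] at h1
    have hr1 : δ * (A + 2 * I + nw ^ 2) = δ * A + 2 * δ * I + δ * nw ^ 2 := by ring
    linarith only [h1, hr1]
  obtain ⟨hτb, hAb, hBb⟩ := rate_arith δ A Bq τ I no γ hδ hδ1 hγ hno0
    (by rw [hq] at hsmall; exact hsmall) hA0 hB0 hτ0 hE1 hnegI
  have hC2' : C ^ 2 * δ = (2 + 2 * no) ^ 2 / (1 - γ * no) * δ := by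
    rw [hC2, hq]
  have hC2'' : (C * δ) ^ 2 = (2 + 2 * no) ^ 2 / (1 - γ * no) * δ ^ 2 := by
    rw [mul_pow, hC2, hq]
  have hgoal3 : ‖F xδ - y‖ ≤ C * δ := by
    have h1 : δ * (2 + 2 * no) ≤ C * δ := by
      rw [mul_comm δ (2 + 2 * no)]
      exact mul_le_mul_of_nonneg_right hCge hδ.le
    calc ‖F xδ - y‖ ≤ τ + δ := hFy
      _ ≤ δ * (2 + 2 * no) := by linarith only [hτb]
      _ ≤ C * δ := h1
  refine ⟨?_, ?_, hgoal3⟩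
  · have hAb' : A ≤ C ^ 2 * δ := by rw [hC2']; exact hAb
    calc Real.sqrt A ≤ Real.sqrt (C ^ 2 * δ) := Real.sqrt_le_sqrt hAb'
      _ = C * Real.sqrt δ := by
        rw [Real.sqrt_mul (sq_nonneg C), Real.sqrt_sq hCpos.le]
  · have hBb' : Bq ≤ (C * δ) ^ 2 := by rw [hC2'']; exact hBb
    calc Real.sqrt Bq ≤ Real.sqrt ((C * δ) ^ 2) := Real.sqrt_le_sqrt hBb'
      _ = C * δ := Real.sqrt_sq (by positivity)
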